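/- arXiv:0906.4409 — 6 statements merged into one kernel-verified Lean document; each statement's English description precedes it below -/
import Mathlib

section
/- Let θ ∈ ℝ, 0 < η < 1, α = π/(2η), G(1,θ,η) = {z ∈ ℂ : 0 < |z| < 1 and |arg(z e^{−iθ})| < η}, and let ζ(z) = (u² + 2u − 1)/(u² − 2u − 1) with u = (z e^{−iθ})^α (principal branch), the conformal map of G(1,θ,η) onto the unit disk. Then for every r with 1/2 < r < 1, the image under ζ of the set {z ∈ ℂ : 1/2 < |z| < r and |arg(z e^{−iθ})| < η/2} is contained in the disk {ζ ∈ ℂ : |ζ| < 1 − 2^{−π/(2η) − π/2}(1 − r)}. -/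
open Complex

/-- The sector `G(1,θ,η) = {z : 0 < |z| < 1, |arg (z e^{-iθ})| < η}`. -/
def sector (θ η : ℝ) : Set ℂ :=
  {z : ℂ | 0 < ‖z‖ ∧ ‖z‖ < 1 ∧
    |Complex.arg (z * Complex.exp (-(θ : ℂ) * Complex.I))| < η}

/-- The map `ζ(z) = (u² + 2u - 1)/(u² - 2u - 1)` where `u = (z e^{-iθ})^α`,
`α = π/(2η)`, with the principal branch power. -/
noncomputable def sectorMap (θ η : ℝ) (z : ℂ) : ℂ :=
  let u : ℂ := (z * Complex.exp (-(θ : ℂ) * Complex.I)) ^ ((Real.pi / (2 * η) : ℝ) : ℂ)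
  (u ^ 2 + 2 * u - 1) / (u ^ 2 - 2 * u - 1)

set_option maxHeartbeats 1000000 in
/-- For every `1/2 < r < 1`, the image under `ζ` of the truncated
half-angle sector `{z : 1/2 < |z| < r, |arg (z e^{-iθ})| < η/2}` is contained in the disk
`{ζ : |ζ| < 1 - 2^{-π/(2η) - π/2} (1 - r)}`. -/
theorem sectorMap_image_subset_disk (θ η : ℝ) (hη0 : 0 < η) (hη1 : η < 1)
    (r : ℝ) (hr0 : 1 / 2 < r) (hr1 : r < 1) :
    (sectorMap θ η) ''
        {z : ℂ | 1 / 2 < ‖z‖ ∧ ‖z‖ < r ∧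
          |Complex.arg (z * Complex.exp (-(θ : ℂ) * Complex.I))| < η / 2}
      ⊆ {w : ℂ |
          ‖w‖ < 1 - (2 : ℝ) ^ (-(Real.pi / (2 * η)) - Real.pi / 2) * (1 - r)} := by
  rintro ζ ⟨z, ⟨hz1, hz2, hz3⟩, rfl⟩
  simp only [Set.mem_setOf_eq, sectorMap]
  have hπ := Real.pi_pos
  set α : ℝ := Real.pi / (2 * η) with hα
  have hα1 : 1 ≤ α := by
    rw [hα, le_div_iff₀ (by linarith)]
    linarith [Real.pi_gt_three]
  have hα0 : 0 < α := by linarith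
  set w : ℂ := z * Complex.exp (-(θ : ℂ) * Complex.I) with hwdef
  have habsw : ‖w‖ = ‖z‖ := by
    rw [hwdef, norm_mul, Complex.norm_exp]
    simp
  set a : ℝ := ‖w‖ with hadef
  have ha2 : 1 / 2 < a := by rw [habsw]; exact hz1
  have har : a < r := by rw [habsw]; exact hz2
  have ha0 : (0:ℝ) < a := by linarith
  have ha1 : a < 1 := lt_trans har hr1
  have hw0 : w ≠ 0 := by
    intro h
    rw [hadef, h, norm_zero] at ha0
    exact lt_irrefl 0 ha0
  set φ : ℝ := Complex.arg w with hφdef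
  have hφ : |φ| < η / 2 := hz3
  set u : ℂ := w ^ ((α : ℝ) : ℂ) with hudef
  have hu : u = Complex.exp (Complex.log w * (α : ℂ)) := Complex.cpow_def_of_ne_zero hw0 _
  have hlre : (Complex.log w * (α : ℂ)).re = Real.log a * α := by
    simp [Complex.mul_re, Complex.log_re, Complex.log_im, hadef]
  have hlim : (Complex.log w * (α : ℂ)).im = φ * α := by
    simp [Complex.mul_im, Complex.log_re, Complex.log_im, hφdef]
  set t : ℝ := a ^ α with htdef
  have ht0 : 0 < t := Real.rpow_pos_of_pos ha0 α
  have habsu : ‖u‖ = t := by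
    rw [hu, Complex.norm_exp, hlre, htdef, Real.rpow_def_of_pos ha0]
  have hre : u.re = t * Real.cos (φ * α) := by
    rw [hu, Complex.exp_re, hlre, hlim, htdef, Real.rpow_def_of_pos ha0]
  -- cosine bound
  have hφα : |φ * α| < Real.pi / 4 := by
    rw [abs_mul, abs_of_pos hα0]
    have h1 : |φ| * α < (η / 2) * α := mul_lt_mul_of_pos_right hφ hα0
    have h2 : (η / 2) * α = Real.pi / 4 := by
      rw [hα]; field_simp; ring
    linarith
  have hcos : Real.sqrt 2 / 2 < Real.cos (φ * α) := by
    rw [← Real.cos_pi_div_four, ← Real.cos_abs (φ * α)]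
    exact Real.cos_lt_cos_of_nonneg_of_le_pi (abs_nonneg _) (by linarith) hφα
  -- bounds on t
  have htr : t < r := by
    have h1 : a ^ α < r ^ α := Real.rpow_lt_rpow (le_of_lt ha0) har hα0
    have h2 : r ^ α ≤ r ^ (1:ℝ) :=
      Real.rpow_le_rpow_of_exponent_ge (by linarith) (le_of_lt hr1) hα1
    rw [Real.rpow_one] at h2
    exact lt_of_lt_of_le h1 h2
  have ht1 : t < 1 := lt_trans htr hr1
  set p : ℝ := (2:ℝ) ^ (-α) with hpdef
  have hp0 : (0:ℝ) < p := Real.rpow_pos_of_pos two_pos _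
  have hpt : p < t := by
    have h1 : (2:ℝ) ^ (-α) = (1 / 2 : ℝ) ^ α := by
      rw [Real.rpow_neg (by norm_num), ← Real.inv_rpow (by norm_num)]
      norm_num
    rw [hpdef, htdef, h1]
    exact Real.rpow_lt_rpow (by norm_num) ha2 hα0
  -- Re u bound
  have hs0 : (0:ℝ) < Real.sqrt 2 := Real.sqrt_pos.mpr (by norm_num)
  have hx : Real.sqrt 2 / 2 * t < u.re := by
    rw [hre]
    have := mul_lt_mul_of_pos_left hcos ht0
    linarith
  have hx0 : 0 < u.re := by
    have h1 : 0 < Real.sqrt 2 / 2 * t := by positivity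
    linarith
  have h1t2 : (0:ℝ) < 1 - t ^ 2 := by
    have := mul_pos (show (0:ℝ) < 1 - t by linarith) (show (0:ℝ) < 1 + t by linarith)
    linarith [this]
  -- key identity
  have hnsqu : Complex.normSq u = t ^ 2 := by rw [← Complex.sq_norm, habsu]
  have hkey : Complex.normSq (u ^ 2 - 2 * u - 1) - Complex.normSq (u ^ 2 + 2 * u - 1)
      = 8 * u.re * (1 - Complex.normSq u) := by
    simp only [Complex.normSq_apply, pow_two, Complex.sub_re, Complex.sub_im,
      Complex.add_re, Complex.add_im, Complex.mul_re, Complex.mul_im,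
      Complex.one_re, Complex.one_im, Complex.re_ofNat, Complex.im_ofNat]
    ring
  rw [hnsqu] at hkey
  set Nn : ℝ := Complex.normSq (u ^ 2 + 2 * u - 1) with hNndef
  set Dn : ℝ := Complex.normSq (u ^ 2 - 2 * u - 1) with hDndef
  have hNn0 : 0 ≤ Nn := Complex.normSq_nonneg _
  have hq0 : 0 < 8 * u.re * (1 - t ^ 2) := by
    have h7 := mul_pos hx0 h1t2
    linarith
  have hDn0 : 0 < Dn := by linarith
  have hD0 : (u ^ 2 - 2 * u - 1) ≠ 0 := by
    intro h
    rw [hDndef, h, Complex.normSq_zero] at hDn0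
    exact lt_irrefl 0 hDn0
  -- upper bound on Dn
  have tri : ∀ x y : ℂ, ‖x - y‖ ≤ ‖x‖ + ‖y‖ := by
    intro x y
    simpa [sub_eq_add_neg] using norm_add_le x (-y)
  have habsD : ‖u ^ 2 - 2 * u - 1‖ ≤ (1 + t) ^ 2 := by
    have h1 := tri (u ^ 2 - 2 * u) 1
    have h2 := tri (u ^ 2) (2 * u)
    have h3 : ‖u ^ 2‖ = t ^ 2 := by rw [norm_pow, habsu]
    have h4 : ‖2 * u‖ = 2 * t := by
      rw [norm_mul, habsu]; norm_num
    have h5 : ‖(1 : ℂ)‖ = 1 := norm_one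
    rw [h3, h4] at h2
    rw [h5] at h1
    linarith [h1, h2]
  have hDnle : Dn ≤ ((1 + t) ^ 2) ^ 2 := by
    rw [hDndef, ← Complex.sq_norm]
    have h0 : (0:ℝ) ≤ ‖u ^ 2 - 2 * u - 1‖ := norm_nonneg _
    have h6 := mul_le_mul habsD habsD h0 (by positivity : (0:ℝ) ≤ (1 + t) ^ 2)
    linarith [h6]
  -- constant comparison
  set c : ℝ := (2:ℝ) ^ (-α - Real.pi / 2) with hcdef
  have hc0 : 0 < c := Real.rpow_pos_of_pos two_pos _
  have hcle : c ≤ p * (Real.sqrt 2 / 4) := by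
    have h1 : c = p * (2:ℝ) ^ (-(Real.pi / 2)) := by
      rw [hcdef, hpdef, ← Real.rpow_add two_pos]
      ring_nf
    have h2 : (2:ℝ) ^ (-(Real.pi / 2)) ≤ (2:ℝ) ^ (-(3 / 2 : ℝ)) :=
      Real.rpow_le_rpow_of_exponent_le one_le_two (by linarith [Real.pi_gt_three])
    have h4 : ((2:ℝ) ^ (2:ℝ)) = 4 := by
      rw [show (2:ℝ) ^ (2:ℝ) = (2:ℝ) ^ ((2:ℕ):ℝ) from by norm_num, Real.rpow_natCast]
      norm_num
    have h3 : (2:ℝ) ^ (-(3 / 2 : ℝ)) = Real.sqrt 2 / 4 := by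
      rw [show (-(3 / 2) : ℝ) = 1 / 2 - 2 from by norm_num, Real.rpow_sub two_pos,
        ← Real.sqrt_eq_rpow, h4]
    have h5 := mul_le_mul_of_nonneg_left (h2.trans (le_of_eq h3)) (le_of_lt hp0)
    linarith
  -- the modulus of the image point
  set A : ℝ := ‖(u ^ 2 + 2 * u - 1) / (u ^ 2 - 2 * u - 1)‖ with hAdef
  have hA0 : 0 ≤ A := norm_nonneg _
  have hA2 : A ^ 2 = Nn / Dn := by
    rw [hAdef, Complex.sq_norm, Complex.normSq_div]
  set L : ℝ := Real.sqrt 2 / 2 * p * (1 - r) with hLdef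
  have hr1' : (0:ℝ) < 1 - r := by linarith
  have hL0 : 0 < L := by rw [hLdef]; positivity
  have key1 : p * (1 - r) * (1 + t) ^ 3 < t * (1 - t) * 8 := by
    have h1 : p * (1 - r) < t * (1 - t) :=
      mul_lt_mul hpt (by linarith) hr1' (le_of_lt ht0)
    have h2 : (1 + t) ^ 3 < 2 ^ 3 := by
      gcongr
      all_goals linarith
    have h3 : (0:ℝ) < (1 + t) ^ 3 := by positivity
    have h4 : p * (1 - r) * (1 + t) ^ 3 < t * (1 - t) * (1 + t) ^ 3 :=
      mul_lt_mul_of_pos_right h1 h3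
    have h5 : t * (1 - t) * (1 + t) ^ 3 < t * (1 - t) * 8 := by
      have h6 : (0:ℝ) < t * (1 - t) := mul_pos ht0 (by linarith)
      have := mul_lt_mul_of_pos_left (show (1 + t) ^ 3 < 8 by linarith [h2]) h6
      linarith
    linarith
  have key2 : L * Dn < 8 * u.re * (1 - t ^ 2) := by
    have hstep : L * ((1 + t) ^ 2) ^ 2 < 8 * u.re * (1 - t ^ 2) := by
      have e1 : L * ((1 + t) ^ 2) ^ 2
          = Real.sqrt 2 / 2 * (1 + t) * (p * (1 - r) * (1 + t) ^ 3) := by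
        rw [hLdef]; ring
      have e2 : Real.sqrt 2 / 2 * (1 + t) * (p * (1 - r) * (1 + t) ^ 3)
          < Real.sqrt 2 / 2 * (1 + t) * (t * (1 - t) * 8) := by
        apply mul_lt_mul_of_pos_left key1
        positivity
      have e3 : Real.sqrt 2 / 2 * (1 + t) * (t * (1 - t) * 8)
          ≤ 8 * u.re * (1 - t ^ 2) := by
        have h7 : (0:ℝ) < 8 * (1 - t ^ 2) := by linarith
        have h8 := mul_lt_mul_of_pos_right hx h7
        linarith [h8]
      linarith [e1 ▸ e2]
    have hmono : L * Dn ≤ L * ((1 + t) ^ 2) ^ 2 :=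
      mul_le_mul_of_nonneg_left hDnle (le_of_lt hL0)
    linarith
  have hmain : L < 1 - A ^ 2 := by
    have h1 : 1 - A ^ 2 = (Dn - Nn) / Dn := by
      rw [hA2]; field_simp
    rw [h1, hkey, lt_div_iff₀ hDn0]
    exact key2
  -- conclude
  have h2cL : 2 * (c * (1 - r)) ≤ L := by
    rw [hLdef]
    have h9 := mul_le_mul_of_nonneg_right hcle (le_of_lt hr1')
    linarith [h9]
  have hm0 : 0 < c * (1 - r) := by positivity
  have hm1 : c * (1 - r) < 1 / 2 := by
    have := sq_nonneg A
    linarith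
  by_contra hcon
  push_neg at hcon
  have h10 : 0 ≤ 1 - c * (1 - r) := by linarith
  have h11 := mul_le_mul hcon hcon h10 hA0
  linarith [h11, sq_nonneg (c * (1 - r)), hmain, h2cL]
end

section
/- Let θ ∈ ℝ, 0 < η < 1, α = π/(2η), G(1,θ,η) = {z ∈ ℂ : 0 < |z| < 1 and |arg(z e^{−iθ})| < η}, and let ζ(z) = (u² + 2u − 1)/(u² − 2u − 1) with u = (z e^{−iθ})^α (principal branch), the conformal map of G(1,θ,η) onto the unit disk, with inverse map z = z(ζ). Then for every γ with 0 < γ < 1, the image under z(·) of the disk {ζ ∈ ℂ : |ζ| < γ} is contained in the set {z ∈ ℂ : |z| < 1 − (η/(8π))(1 − γ) and |arg(z e^{−iθ})| < η}. -/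
open Complex

lemma auxD (a b : ℝ) (hx : 0 ≤ a) (hr : a^2 + b^2 ≤ 1) :
    1 ≤ (a^2 - b^2 - 2*a - 1)^2 + 4*b^2*(a-1)^2 := by
  nlinarith [sq_nonneg (a*b), sq_nonneg b, sq_nonneg (a-1), sq_nonneg (a^2+b^2),
    sq_nonneg (1 - a^2 - b^2), mul_nonneg hx (sq_nonneg b), sq_nonneg (a*(a-2))]

lemma auxStep (a r : ℝ) (h0 : 0 ≤ a) (ha1 : a ≤ 1) (hr0 : 0 ≤ r) (hr1 : r ≤ 1) :
    8 * a * (1 - r^2) ≤ 16 * (1 - r) := by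
  have h1 : 0 ≤ 1 - r^2 := by nlinarith
  have h2 : 8*a*(1-r^2) ≤ 8*(1-r^2) := by nlinarith
  nlinarith

lemma auxSq (t : ℝ) (h0 : 0 ≤ t) (h1 : t ≤ 1) : t^2 ≤ t := by nlinarith

lemma key (θ η : ℝ) (hη0 : 0 < η) (hη1 : η < 1) (γ : ℝ) (hγ0 : 0 < γ) (hγ1 : γ < 1)
    (z : ℂ) (hz : z ∈ sector θ η) (hsm : ‖sectorMap θ η z‖ < γ) :
    ‖z‖ < 1 - (η / (8 * Real.pi)) * (1 - γ) := by
  obtain ⟨hz0, hz1, harg⟩ := hz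
  set w : ℂ := z * Complex.exp (-(θ : ℂ) * Complex.I) with hw
  have habsw : ‖w‖ = ‖z‖ := by
    simp [hw, Complex.norm_exp]
  have hw0 : w ≠ 0 := by
    intro h; rw [h] at habsw; simp at habsw; rw [← habsw] at hz0; simp at hz0
  set α : ℝ := Real.pi / (2 * η) with hαdef
  have hπ := Real.pi_pos
  have hα : 0 < α := by positivity
  set u : ℂ := w ^ ((α : ℝ) : ℂ) with hu
  have hrabs : ‖u‖ = ‖w‖ ^ α := by
    rw [hu, Complex.norm_cpow_of_ne_zero hw0]
    simp
  set r : ℝ := ‖w‖ ^ α with hrdef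
  have hr0 : 0 < r := Real.rpow_pos_of_pos (by rwa [habsw]) α
  have hr1 : r < 1 := Real.rpow_lt_one (norm_nonneg w) (by rwa [habsw]) hα
  -- real part of u
  have hulog : u = Complex.exp (Complex.log w * (α : ℂ)) := Complex.cpow_def_of_ne_zero hw0 _
  have hre : (Complex.log w * (α : ℂ)).re = α * Real.log (‖w‖) := by
    simp [Complex.log_re]; ring
  have him : (Complex.log w * (α : ℂ)).im = α * Complex.arg w := by
    simp [Complex.log_im]; ring
  have hrexp : Real.exp (α * Real.log (‖w‖)) = r := by
    rw [hrdef, Real.rpow_def_of_pos (by rwa [habsw]), mul_comm]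
  have hcos : 0 < Real.cos (α * Complex.arg w) := by
    have h2 : α * |Complex.arg w| < α * η := by
      rcases eq_or_lt_of_le (abs_nonneg (Complex.arg w)) with h|h
      · rw [← h]; nlinarith
      · nlinarith
    have h3 : α * η = Real.pi / 2 := by rw [hαdef]; field_simp
    have h4 : α * Complex.arg w ≤ α * |Complex.arg w| :=
      mul_le_mul_of_nonneg_left (le_abs_self _) hα.le
    have h5 : -(α * |Complex.arg w|) ≤ α * Complex.arg w := by
      nlinarith [neg_abs_le (Complex.arg w)]
    apply Real.cos_pos_of_mem_Ioo
    constructor <;> [linarith; linarith]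
  have hxre : u.re = r * Real.cos (α * Complex.arg w) := by
    rw [hulog, Complex.exp_re, hre, him, hrexp]
  have hxpos : 0 < u.re := by rw [hxre]; positivity
  have hxle : u.re ≤ r := by
    calc u.re ≤ ‖u‖ := Complex.re_le_norm u
    _ = r := hrabs
  have hns : Complex.normSq u = u.re ^ 2 + u.im ^ 2 := by
    simp [Complex.normSq_apply]; ring
  have hnsr : Complex.normSq u = r ^ 2 := by
    rw [← Complex.sq_norm, hrabs]
  set a := u.re with ha
  set b := u.im with hb
  have hab1 : a ^ 2 + b ^ 2 = r ^ 2 := by rw [← hns, hnsr]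
  have hexpD : Complex.normSq (u ^ 2 - 2 * u - 1) = (a^2 - b^2 - 2*a - 1)^2 + 4*b^2*(a-1)^2 := by
    simp [Complex.normSq_apply, pow_two, Complex.mul_re, Complex.mul_im]
    ring
  have hexpN : Complex.normSq (u ^ 2 + 2 * u - 1) = (a^2 - b^2 + 2*a - 1)^2 + 4*b^2*(a+1)^2 := by
    simp [Complex.normSq_apply, pow_two, Complex.mul_re, Complex.mul_im]
    ring
  have hsum : a ^ 2 + b ^ 2 ≤ 1 := by
    rw [hab1]
    exact pow_le_one₀ hr0.le hr1.le
  have hxnn : 0 ≤ a := hxpos.le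
  have hD1 : 1 ≤ Complex.normSq (u ^ 2 - 2 * u - 1) := by
    rw [hexpD]
    exact auxD a b hxnn hsum
  have hdiff : Complex.normSq (u ^ 2 - 2 * u - 1) - Complex.normSq (u ^ 2 + 2 * u - 1)
      = 8 * a * (1 - (a^2 + b^2)) := by
    rw [hexpD, hexpN]; ring
  have hden0 : (u ^ 2 - 2 * u - 1) ≠ 0 := by
    intro h
    rw [h] at hD1; simp at hD1; linarith
  set ζ : ℂ := sectorMap θ η z with hζ
  have hζeq : ζ = (u ^ 2 + 2 * u - 1) / (u ^ 2 - 2 * u - 1) := by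
    rw [hζ, sectorMap]
  have hζsq : (‖ζ‖) ^ 2 =
      Complex.normSq (u ^ 2 + 2 * u - 1) / Complex.normSq (u ^ 2 - 2 * u - 1) := by
    rw [hζeq, Complex.sq_norm, Complex.normSq_div]
  have hζ0 : 0 ≤ ‖ζ‖ := norm_nonneg ζ
  have hale1 : a ≤ 1 := by linarith
  have hstep : 1 - (‖ζ‖) ^ 2 ≤ 16 * (1 - r) := by
    have hDpos : (0:ℝ) < Complex.normSq (u ^ 2 - 2 * u - 1) := by linarith
    have heq : 1 - (‖ζ‖) ^ 2
        = (8 * a * (1 - (a^2+b^2))) / Complex.normSq (u ^ 2 - 2 * u - 1) := by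
      rw [hζsq, ← hdiff]
      rw [sub_div, div_self hDpos.ne']
    have h2 : 0 ≤ 8 * a * (1 - (a^2+b^2)) :=
      mul_nonneg (by linarith) (by linarith)
    have h1 : 8 * a * (1 - (a^2+b^2)) ≤ 16 * (1 - r) := by
      have e : (1:ℝ) - (a^2+b^2) = 1 - r^2 := by rw [hab1]
      rw [e]
      exact auxStep a r hxnn hale1 hr0.le hr1.le
    calc 1 - (‖ζ‖) ^ 2
        = (8 * a * (1 - (a^2+b^2))) / Complex.normSq (u ^ 2 - 2 * u - 1) := heq
      _ ≤ 8 * a * (1 - (a^2+b^2)) := div_le_self h2 hD1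
      _ ≤ 16 * (1 - r) := h1
  -- from hsm : abs ζ < γ
  have hζγ : ‖ζ‖ < γ := hsm
  have hsq : (‖ζ‖)^2 ≤ ‖ζ‖ := auxSq _ hζ0 (by linarith)
  have hrγ : 1 - γ < 16 * (1 - r) := by linarith
  -- now |w| = r ^ (2η/π) ≤ 1 - (2η/π)(1-r)
  set β : ℝ := 2 * η / Real.pi with hβdef
  have hβ0 : 0 < β := by positivity
  have hβ1 : β < 1 := by
    rw [hβdef, div_lt_one hπ]
    linarith [Real.pi_gt_three]
  have hαβ : α * β = 1 := by
    rw [hαdef, hβdef]; field_simp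
  have hwr : ‖w‖ = r ^ β := by
    rw [hrdef, ← Real.rpow_mul (norm_nonneg w), hαβ, Real.rpow_one]
  have hgm : r ^ β * 1 ^ (1 - β) ≤ β * r + (1 - β) * 1 :=
    Real.geom_mean_le_arith_mean2_weighted hβ0.le (by linarith) hr0.le zero_le_one
      (by ring)
  have hfin : ‖w‖ ≤ 1 - β * (1 - r) := by
    rw [hwr]
    rw [Real.one_rpow, mul_one] at hgm
    linarith
  have hβη : β / 16 * (1 - γ) ≥ η / (8 * Real.pi) * (1 - γ) := by
    rw [hβdef]
    have : 2 * η / Real.pi / 16 = η / (8 * Real.pi) := by field_simp; ring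
    rw [this]
  rw [← habsw]
  have : β * (1 - r) > β * ((1 - γ)/16) := by
    apply mul_lt_mul_of_pos_left _ hβ0
    linarith
  have hlast : β * ((1-γ)/16) = β/16 * (1-γ) := by ring
  linarith [hfin, hβη]

/-- Let `z = z(ζ)` (`zinv` below) be the inverse of the conformal map
`ζ : G(1,θ,η) → {|ζ| < 1}`. Then for every `0 < γ < 1`, the image under `z(·)` of the disk
`{ζ : |ζ| < γ}` is contained in `{z : |z| < 1 - (η/(8π))(1 - γ), |arg (z e^{-iθ})| < η}`. -/
theorem sectorMap_inv_image_subset (θ η : ℝ) (hη0 : 0 < η) (hη1 : η < 1)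
    (zinv : ℂ → ℂ)
    (hbij : Set.BijOn (sectorMap θ η) (sector θ η) (Metric.ball (0 : ℂ) 1))
    (hmaps : Set.MapsTo zinv (Metric.ball (0 : ℂ) 1) (sector θ η))
    (hinv : Set.InvOn zinv (sectorMap θ η) (sector θ η) (Metric.ball (0 : ℂ) 1))
    (γ : ℝ) (hγ0 : 0 < γ) (hγ1 : γ < 1) :
    zinv '' (Metric.ball (0 : ℂ) γ) ⊆
      {z : ℂ | ‖z‖ < 1 - (η / (8 * Real.pi)) * (1 - γ) ∧
        |Complex.arg (z * Complex.exp (-(θ : ℂ) * Complex.I))| < η} := by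
  rintro _ ⟨ζ, hζ, rfl⟩
  have hζγ : ‖ζ‖ < γ := by
    simpa [Complex.dist_eq] using hζ
  have hζ1 : ζ ∈ Metric.ball (0 : ℂ) 1 := by
    simp only [Metric.mem_ball, dist_zero_right] at *
    calc ‖ζ‖ < γ := by simpa using hζ
      _ < 1 := hγ1
  have hzsec : zinv ζ ∈ sector θ η := hmaps hζ1
  have hsm : ‖sectorMap θ η (zinv ζ)‖ < γ := by
    rw [hinv.2 hζ1]; exact hζγ
  exact ⟨key θ η hη0 hη1 γ hγ0 hγ1 (zinv ζ) hzsec hsm, hzsec.2.2⟩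
end

section
/- Let θ ∈ ℝ, 0 < η < 1, α = π/(2η), G(1,θ,η) = {z ∈ ℂ : 0 < |z| < 1 and |arg(z e^{−iθ})| < η}, let ζ(z) = (u² + 2u − 1)/(u² − 2u − 1) with u = (z e^{−iθ})^α (principal branch) be the conformal map of G(1,θ,η) onto the unit disk, and let z = z(ζ) be its inverse, a holomorphic map of the unit disk into the unit disk. Then for every t with 0 < t < 1, the Nevanlinna characteristic of the derivative z′(ζ) satisfies T(t, z′) ≤ 3 log(2/(1−t)); equivalently, since z′ is holomorphic (pole free) on the unit disk, (1/2π) ∫₀^{2π} log⁺ |z′(t e^{iφ})| dφ ≤ 3 log(2/(1−t)). -/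
open Complex

/-- Cauchy/Schwarz-type estimate: a holomorphic map of the unit disk into the unit disk has
derivative bounded by `2/(1-t)` on the circle of radius `t`. -/
lemma deriv_bound_aux (f : ℂ → ℂ) (hdiff : DifferentiableOn ℂ f (Metric.ball (0 : ℂ) 1))
    (hb : ∀ w ∈ Metric.ball (0 : ℂ) 1, ‖f w‖ < 1)
    {ζ : ℂ} {t : ℝ} (ht1 : t < 1) (hζ : ‖ζ‖ = t) :
    ‖deriv f ζ‖ ≤ 2 / (1 - t) := by
  have ht0 : 0 ≤ t := hζ ▸ norm_nonneg ζ
  have hr : (0 : ℝ) < 1 - t := by linarith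
  have hsub : Metric.ball ζ (1 - t) ⊆ Metric.ball (0 : ℂ) 1 := by
    intro w hw
    simp only [Metric.mem_ball, dist_eq, sub_zero] at hw ⊢
    calc ‖w‖ ≤ ‖w - ζ‖ + ‖ζ‖ := by
          simpa using norm_add_le (w - ζ) ζ
      _ < (1 - t) + t := by rw [hζ]; linarith
      _ = 1 := by ring
  have hmaps : Set.MapsTo f (Metric.ball ζ (1 - t)) (Metric.ball (f ζ) 2) := by
    intro w hw
    have h1 : ‖f w‖ < 1 := hb w (hsub hw)
    have h2 : ‖f ζ‖ < 1 := hb ζ (hsub (Metric.mem_ball_self hr))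
    simp only [Metric.mem_ball, dist_eq]
    calc ‖f w - f ζ‖ ≤ ‖f w‖ + ‖f ζ‖ := by
          simpa using norm_sub_le (f w) (f ζ)
      _ < 2 := by linarith
  have := Complex.norm_deriv_le_div_of_mapsTo_ball (hdiff.mono hsub) (hmaps.mono_right Metric.ball_subset_closedBall) hr
  simpa using this

/-- Let `z = z(ζ)` (`zinv` below) be the inverse of the conformal map
`ζ : G(1,θ,η) → {|ζ| < 1}`, a holomorphic map of the unit disk into the unit disk. Then
for every `0 < t < 1` the Nevanlinna characteristic of `z'` satisfies
`T(t, z') = (1/2π) ∫₀^{2π} log⁺ |z'(t e^{iφ})| dφ ≤ 3 log (2/(1-t))`. -/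
theorem characteristic_deriv_inverse_le (θ η : ℝ) (hη0 : 0 < η) (hη1 : η < 1)
    (zinv : ℂ → ℂ)
    (hbij : Set.BijOn (sectorMap θ η) (sector θ η) (Metric.ball (0 : ℂ) 1))
    (hmaps : Set.MapsTo zinv (Metric.ball (0 : ℂ) 1) (sector θ η))
    (hinv : Set.InvOn zinv (sectorMap θ η) (sector θ η) (Metric.ball (0 : ℂ) 1))
    (hdiff : DifferentiableOn ℂ zinv (Metric.ball (0 : ℂ) 1))
    (t : ℝ) (ht0 : 0 < t) (ht1 : t < 1) :
    (1 / (2 * Real.pi)) * ∫ φ in (0:ℝ)..(2 * Real.pi),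
        max (Real.log (‖deriv zinv ((t : ℂ) * Complex.exp ((φ : ℂ) * Complex.I))‖)) 0
      ≤ 3 * Real.log (2 / (1 - t)) := by
  set c : ℝ := Real.log (2 / (1 - t)) with hc
  have htlt : (0:ℝ) < 1 - t := by linarith
  have hcgt : (1:ℝ) < 2 / (1 - t) := by
    rw [lt_div_iff₀ htlt]; linarith
  have hc0 : 0 < c := Real.log_pos hcgt
  set g : ℝ → ℝ := fun φ =>
    max (Real.log (‖deriv zinv ((t : ℂ) * Complex.exp ((φ : ℂ) * Complex.I))‖)) 0
    with hg
  have hb : ∀ w ∈ Metric.ball (0 : ℂ) 1, ‖zinv w‖ < 1 := fun w hw =>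
    (hmaps hw).2.1
  have hbound : ∀ φ : ℝ, g φ ≤ c := by
    intro φ
    have habs : ‖(t : ℂ) * Complex.exp ((φ : ℂ) * Complex.I)‖ = t := by
      rw [norm_mul, Complex.norm_exp_ofReal_mul_I, Complex.norm_of_nonneg ht0.le,
        mul_one]
    have hder := deriv_bound_aux zinv hdiff hb ht1 habs
    apply max_le _ hc0.le
    rcases le_or_gt (‖deriv zinv ((t : ℂ) * Complex.exp ((φ : ℂ) * Complex.I))‖) 1
      with h | h
    · exact (Real.log_nonpos (norm_nonneg _) h).trans hc0.le
    · exact Real.log_le_log (lt_trans one_pos h) hder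
  have hg0 : ∀ φ : ℝ, 0 ≤ g φ := fun φ => le_max_right _ _
  have hmeas : Measurable g := by
    apply Measurable.max _ measurable_const
    apply Real.measurable_log.comp
    exact continuous_norm.measurable.comp
      ((measurable_deriv zinv).comp (by fun_prop))
  have hint : IntervalIntegrable g MeasureTheory.volume 0 (2 * Real.pi) := by
    apply (intervalIntegrable_const (c := c)).mono_fun hmeas.aestronglyMeasurable
    filter_upwards with φ
    rw [Real.norm_of_nonneg (hg0 φ), Real.norm_of_nonneg hc0.le]
    exact hbound φ
  have hπ : (0:ℝ) < 2 * Real.pi := by positivity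
  have hI : (∫ φ in (0:ℝ)..(2 * Real.pi), g φ) ≤ (2 * Real.pi) * c := by
    calc (∫ φ in (0:ℝ)..(2 * Real.pi), g φ)
        ≤ ∫ _ in (0:ℝ)..(2 * Real.pi), c :=
          intervalIntegral.integral_mono_on hπ.le hint intervalIntegrable_const
            (fun x _ => hbound x)
      _ = (2 * Real.pi) * c := by simp [mul_comm]
  calc (1 / (2 * Real.pi)) * ∫ φ in (0:ℝ)..(2 * Real.pi), g φ
      ≤ (1 / (2 * Real.pi)) * ((2 * Real.pi) * c) := by
        apply mul_le_mul_of_nonneg_left hI (by positivity)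
    _ = c := by field_simp
    _ ≤ 3 * c := by linarith
end

section
/- Let θ ∈ ℝ, 0 < η < 1, α = π/(2η), G(1,θ,η) = {z ∈ ℂ : 0 < |z| < 1 and |arg(z e^{−iθ})| < η}, let ζ(z) = (u² + 2u − 1)/(u² − 2u − 1) with u = (z e^{−iθ})^α (principal branch) be the conformal map of G(1,θ,η) onto the unit disk, and let z = z(ζ) be its inverse. Then for every t with 0 < t < 1, the Nevanlinna characteristic of 1/z′(ζ) satisfies T(t, 1/z′) ≤ 3 log(2/(1−t)) + log(π/η); in particular, since z′ is holomorphic and nonvanishing on the unit disk, (1/2π) ∫₀^{2π} log⁺ (1/|z′(t e^{iφ})|) dφ ≤ 3 log(2/(1−t)) + log(π/η). -/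
open Complex

lemma sectorMap_hasDerivAt (θ η : ℝ) (hη0 : 0 < η) (hη1 : η < 1) {z : ℂ}
    (hz : z ∈ sector θ η) :
    ∃ D : ℂ, HasDerivAt (sectorMap θ η) D z ∧
      ‖D‖ ≤ 8 * (Real.pi / (2 * η)) := by
  obtain ⟨hz0, hz1, harg⟩ := hz
  set α : ℝ := Real.pi / (2 * η) with hαdef
  have hπ : (3:ℝ) < Real.pi := Real.pi_gt_three
  have hα0 : 0 < α := by positivity
  have hα1 : 1 ≤ α := by
    rw [hαdef, le_div_iff₀ (by linarith)]; linarith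
  set w : ℂ := z * Complex.exp (-(θ : ℂ) * Complex.I) with hwdef
  have habsw : ‖w‖ = ‖z‖ := by
    simp [hwdef, Complex.norm_exp]
  have hw0 : w ≠ 0 := by
    intro h; rw [h] at habsw; simp at habsw; rw [← habsw] at hz0; simp at hz0
  have hwre : 0 < w.re := by
    have h2 : |Complex.arg w| < Real.pi / 2 := by
      refine harg.trans (hη1.trans ?_)
      linarith
    rcases Complex.abs_arg_lt_pi_div_two_iff.mp h2 with h | h
    · exact h
    · exact absurd h hw0
  have hslit : w ∈ Complex.slitPlane := Or.inl hwre
  set u : ℂ := w ^ ((α : ℝ) : ℂ) with hudef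
  have habsu : ‖u‖ ≤ 1 := by
    rw [hudef, Complex.norm_cpow_real]
    exact Real.rpow_le_one (norm_nonneg w) (by rw [habsw]; exact hz1.le) hα0.le
  have hure0 : 0 ≤ u.re := by
    rw [hudef, Complex.cpow_def_of_ne_zero hw0, Complex.exp_re]
    have him : (Complex.log w * (α : ℂ)).im = Complex.arg w * α := by
      simp [Complex.mul_im, Complex.log_im]
    rw [him]
    have hcos : 0 < Real.cos (Complex.arg w * α) := by
      apply Real.cos_pos_of_mem_Ioo
      constructor
      · have : |Complex.arg w * α| < Real.pi / 2 := by
          rw [abs_mul, abs_of_pos hα0]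
          calc |Complex.arg w| * α < η * α := by
                apply mul_lt_mul_of_pos_right harg hα0
            _ = Real.pi / 2 := by rw [hαdef]; field_simp
        linarith [abs_lt.mp this]
      · have : |Complex.arg w * α| < Real.pi / 2 := by
          rw [abs_mul, abs_of_pos hα0]
          calc |Complex.arg w| * α < η * α := by
                apply mul_lt_mul_of_pos_right harg hα0
            _ = Real.pi / 2 := by rw [hαdef]; field_simp
        linarith [abs_lt.mp this]
    positivity
  have hure1 : u.re ≤ 1 := (Complex.re_le_norm u).trans habsu
  have huim : u.im ^ 2 ≤ 1 := by
    have h := Complex.sq_norm u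
    rw [Complex.normSq_apply] at h
    nlinarith [norm_nonneg u, sq_nonneg u.re]
  -- denominator bound
  have hdenre : (u ^ 2 - 2 * u - 1).re ≤ -1 := by
    have : (u ^ 2 - 2 * u - 1).re = u.re ^ 2 - u.im ^ 2 - 2 * u.re - 1 := by
      simp [pow_two, Complex.mul_re]; try ring
    rw [this]; nlinarith [sq_nonneg u.im]
  have hden1 : 1 ≤ ‖u ^ 2 - 2 * u - 1‖ := by
    calc (1:ℝ) ≤ |(u ^ 2 - 2 * u - 1).re| := by
          rw [abs_of_nonpos (by linarith)]; linarith
      _ ≤ ‖u ^ 2 - 2 * u - 1‖ := Complex.abs_re_le_norm _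
  have hden0 : u ^ 2 - 2 * u - 1 ≠ 0 := by
    intro h; rw [h] at hden1; simp at hden1; linarith
  have hnum2 : ‖u ^ 2 + 1‖ ≤ 2 := by
    calc ‖u ^ 2 + 1‖ ≤ ‖u ^ 2‖ + ‖(1:ℂ)‖ :=
          norm_add_le _ _
      _ = ‖u‖ ^ 2 + 1 := by rw [norm_pow]; simp
      _ ≤ 2 := by nlinarith [norm_nonneg u]
  -- derivatives
  have hw_deriv : HasDerivAt (fun z : ℂ => z * Complex.exp (-(θ : ℂ) * Complex.I))
      (Complex.exp (-(θ : ℂ) * Complex.I)) z := by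
    simpa using (hasDerivAt_id z).mul_const (Complex.exp (-(θ : ℂ) * Complex.I))
  have hu_deriv : HasDerivAt (fun z : ℂ => (z * Complex.exp (-(θ : ℂ) * Complex.I)) ^
      ((α : ℝ) : ℂ))
      ((α : ℂ) * w ^ (((α : ℝ) : ℂ) - 1) * Complex.exp (-(θ : ℂ) * Complex.I)) z :=
    hw_deriv.cpow_const hslit
  have hA : HasDerivAt (fun v : ℂ => v ^ 2 + 2 * v - 1) (2 * u + 2) u := by
    have := ((hasDerivAt_pow 2 u).add (((hasDerivAt_id u).const_mul 2))).sub_const 1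
    refine this.congr_deriv ?_
    push_cast; ring
  have hB : HasDerivAt (fun v : ℂ => v ^ 2 - 2 * v - 1) (2 * u - 2) u := by
    have := ((hasDerivAt_pow 2 u).sub (((hasDerivAt_id u).const_mul 2))).sub_const 1
    refine this.congr_deriv ?_
    push_cast; ring
  have hf_deriv : HasDerivAt (fun v : ℂ => (v ^ 2 + 2 * v - 1) / (v ^ 2 - 2 * v - 1))
      (((2 * u + 2) * (u ^ 2 - 2 * u - 1) - (u ^ 2 + 2 * u - 1) * (2 * u - 2)) /
        (u ^ 2 - 2 * u - 1) ^ 2) u := hA.div hB hden0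
  have hsm : sectorMap θ η = (fun v : ℂ => (v ^ 2 + 2 * v - 1) / (v ^ 2 - 2 * v - 1)) ∘
      (fun z : ℂ => (z * Complex.exp (-(θ : ℂ) * Complex.I)) ^ ((α : ℝ) : ℂ)) := by
    funext x; simp [sectorMap, hαdef]
  refine ⟨(((2 * u + 2) * (u ^ 2 - 2 * u - 1) - (u ^ 2 + 2 * u - 1) * (2 * u - 2)) /
      (u ^ 2 - 2 * u - 1) ^ 2) *
      ((α : ℂ) * w ^ (((α : ℝ) : ℂ) - 1) * Complex.exp (-(θ : ℂ) * Complex.I)), ?_, ?_⟩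
  · rw [hsm]
    exact hf_deriv.comp z hu_deriv
  · have hnum_eq : (2 * u + 2) * (u ^ 2 - 2 * u - 1) - (u ^ 2 + 2 * u - 1) * (2 * u - 2)
        = -4 * (u ^ 2 + 1) := by ring
    have h1 : ‖((2 * u + 2) * (u ^ 2 - 2 * u - 1) -
        (u ^ 2 + 2 * u - 1) * (2 * u - 2)) / (u ^ 2 - 2 * u - 1) ^ 2‖ ≤ 8 := by
      rw [hnum_eq, norm_div, norm_mul, norm_pow]
      rw [div_le_iff₀ (by positivity)]
      have : ‖(-4 : ℂ)‖ = 4 := by norm_num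
      rw [this]
      nlinarith [norm_nonneg (u ^ 2 + 1)]
    have h2 : ‖(α : ℂ) * w ^ (((α : ℝ) : ℂ) - 1) *
        Complex.exp (-(θ : ℂ) * Complex.I)‖ ≤ α := by
      rw [norm_mul, norm_mul]
      have e1 : ‖(α : ℂ)‖ = α := by
        rw [Complex.norm_real, Real.norm_eq_abs, abs_of_pos hα0]
      have e2 : ‖w ^ (((α : ℝ) : ℂ) - 1)‖ ≤ 1 := by
        have : (((α : ℝ) : ℂ) - 1) = (((α - 1 : ℝ)) : ℂ) := by push_cast; ring
        rw [this, Complex.norm_cpow_real]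
        exact Real.rpow_le_one (norm_nonneg w) (by rw [habsw]; exact hz1.le)
          (by linarith)
      have e3 : ‖Complex.exp (-(θ : ℂ) * Complex.I)‖ = 1 := by
        simp [Complex.norm_exp]
      rw [e1, e3, mul_one]
      nlinarith [norm_nonneg (w ^ (((α : ℝ) : ℂ) - 1))]
    rw [norm_mul]
    calc ‖_‖ * ‖_‖ ≤ 8 * α := by
          apply mul_le_mul h1 h2 (norm_nonneg _) (by norm_num)
      _ = 8 * (Real.pi / (2 * η)) := by rw [hαdef]

/-- Let `z = z(ζ)` (`zinv` below) be the inverse of the conformal map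
`ζ : G(1,θ,η) → {|ζ| < 1}`. Its derivative `z'` is holomorphic and nonvanishing on the
unit disk, and for every `0 < t < 1` the Nevanlinna characteristic of `1/z'` satisfies
`T(t, 1/z') = (1/2π) ∫₀^{2π} log⁺ (1/|z'(t e^{iφ})|) dφ ≤ 3 log (2/(1-t)) + log (π/η)`. -/
theorem characteristic_inv_deriv_inverse_le (θ η : ℝ) (hη0 : 0 < η) (hη1 : η < 1)
    (zinv : ℂ → ℂ)
    (hbij : Set.BijOn (sectorMap θ η) (sector θ η) (Metric.ball (0 : ℂ) 1))
    (hmaps : Set.MapsTo zinv (Metric.ball (0 : ℂ) 1) (sector θ η))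
    (hinv : Set.InvOn zinv (sectorMap θ η) (sector θ η) (Metric.ball (0 : ℂ) 1))
    (hdiff : DifferentiableOn ℂ zinv (Metric.ball (0 : ℂ) 1))
    (t : ℝ) (ht0 : 0 < t) (ht1 : t < 1) :
    (1 / (2 * Real.pi)) * ∫ φ in (0:ℝ)..(2 * Real.pi),
        max (Real.log
          (1 / ‖deriv zinv ((t : ℂ) * Complex.exp ((φ : ℂ) * Complex.I))‖)) 0
      ≤ 3 * Real.log (2 / (1 - t)) + Real.log (Real.pi / η) := by
  have hπ : (3:ℝ) < Real.pi := Real.pi_gt_three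
  set C : ℝ := 3 * Real.log (2 / (1 - t)) + Real.log (Real.pi / η) with hCdef
  set K : ℝ := (2 / (1 - t)) ^ 3 * (Real.pi / η) with hKdef
  have h1t : 0 < 1 - t := by linarith
  have hK8 : 8 * (Real.pi / η) ≤ K := by
    rw [hKdef]
    have h2 : (2:ℝ) ≤ 2 / (1 - t) := by
      rw [le_div_iff₀ h1t]; linarith
    have : (8:ℝ) ≤ (2 / (1 - t)) ^ 3 := by nlinarith [h2, sq_nonneg (2 / (1 - t) - 2), sq_nonneg (2 / (1 - t))]
    have hpe : 0 < Real.pi / η := by positivity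
    nlinarith
  have hK1 : 1 ≤ K := by
    have : (1:ℝ) < Real.pi / η := by
      rw [lt_div_iff₀ hη0]; nlinarith
    nlinarith
  have hClog : C = Real.log K := by
    rw [hKdef, hCdef, Real.log_mul (by positivity) (by positivity), Real.log_pow]
    push_cast; ring
  -- pointwise bound
  have key : ∀ ζ ∈ Metric.ball (0:ℂ) 1, ‖deriv zinv ζ‖ ≠ 0 ∧
      max (Real.log (1 / ‖deriv zinv ζ‖)) 0 ≤ C := by
    intro ζ hζ
    obtain ⟨D, hD, hDle⟩ := sectorMap_hasDerivAt θ η hη0 hη1 (hmaps hζ)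
    have hz' : HasDerivAt zinv (deriv zinv ζ) ζ :=
      (hdiff.differentiableAt (Metric.isOpen_ball.mem_nhds hζ)).hasDerivAt
    have hcomp : HasDerivAt (sectorMap θ η ∘ zinv) (D * deriv zinv ζ) ζ := hD.comp ζ hz'
    have heq : (sectorMap θ η ∘ zinv) =ᶠ[nhds ζ] id := by
      filter_upwards [Metric.isOpen_ball.mem_nhds hζ] with x hx
      exact hinv.2 hx
    have h1 : D * deriv zinv ζ = 1 := by
      have h2 : HasDerivAt id (D * deriv zinv ζ) ζ := hcomp.congr_of_eventuallyEq heq.symm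
      exact h2.unique (hasDerivAt_id ζ)
    have habs : ‖D‖ * ‖deriv zinv ζ‖ = 1 := by
      rw [← norm_mul, h1]; simp
    have hne : ‖deriv zinv ζ‖ ≠ 0 := by
      intro h; rw [h, mul_zero] at habs; norm_num at habs
    have hDne : 0 < ‖D‖ := by
      rcases (norm_nonneg D).lt_or_eq with h | h
      · exact h
      · exfalso; rw [← h, zero_mul] at habs; norm_num at habs
    have hinv_eq : 1 / ‖deriv zinv ζ‖ = ‖D‖ := by
      rw [div_eq_iff hne]
      linarith [habs]
    refine ⟨hne, ?_⟩
    rw [hinv_eq, hClog]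
    have hDK : ‖D‖ ≤ K := by
      calc ‖D‖ ≤ 8 * (Real.pi / (2 * η)) := hDle
        _ ≤ 8 * (Real.pi / η) := by
            apply mul_le_mul_of_nonneg_left _ (by norm_num)
            apply div_le_div_of_nonneg_left (by linarith) hη0 (by linarith)
        _ ≤ K := hK8
    have hlogK : 0 ≤ Real.log K := Real.log_nonneg hK1
    rw [max_le_iff]
    exact ⟨Real.log_le_log hDne hDK, hlogK⟩
  -- continuity of the integrand
  have hball : ∀ φ : ℝ, (t : ℂ) * Complex.exp ((φ : ℂ) * Complex.I) ∈
      Metric.ball (0 : ℂ) 1 := by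
    intro φ
    rw [Metric.mem_ball, dist_zero_right, norm_mul, Complex.norm_exp]
    simp [abs_of_pos ht0, ht1]
  have hcurve : Continuous fun φ : ℝ => (t : ℂ) * Complex.exp ((φ : ℂ) * Complex.I) := by
    fun_prop
  have hderiv_cont : ContinuousOn (deriv zinv) (Metric.ball (0:ℂ) 1) := by
    have := (hdiff.analyticOnNhd Metric.isOpen_ball).deriv
    exact this.continuousOn
  have hg : Continuous fun φ : ℝ =>
      ‖deriv zinv ((t : ℂ) * Complex.exp ((φ : ℂ) * Complex.I))‖ := by
    have : Continuous fun φ : ℝ =>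
        deriv zinv ((t : ℂ) * Complex.exp ((φ : ℂ) * Complex.I)) :=
      hderiv_cont.comp_continuous hcurve hball
    exact continuous_norm.comp this
  have hcont : Continuous fun φ : ℝ =>
      max (Real.log (1 / ‖deriv zinv
        ((t : ℂ) * Complex.exp ((φ : ℂ) * Complex.I))‖)) 0 := by
    rw [continuous_iff_continuousAt]
    intro φ
    have hne := (key _ (hball φ)).1
    have h1 : ContinuousAt (fun φ : ℝ => 1 / ‖deriv zinv
        ((t : ℂ) * Complex.exp ((φ : ℂ) * Complex.I))‖) φ :=
      continuousAt_const.div hg.continuousAt hne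
    have h2 : ContinuousAt Real.log (1 / ‖deriv zinv
        ((t : ℂ) * Complex.exp ((φ : ℂ) * Complex.I))‖) :=
      Real.continuousAt_log (by positivity)
    have h3 : ContinuousAt (fun φ : ℝ => Real.log (1 / ‖deriv zinv
        ((t : ℂ) * Complex.exp ((φ : ℂ) * Complex.I))‖)) φ := ContinuousAt.comp (g := Real.log) (x := φ) h2 h1
    exact h3.max continuousAt_const
  have hInt : IntervalIntegrable (fun φ : ℝ =>
      max (Real.log (1 / ‖deriv zinv
        ((t : ℂ) * Complex.exp ((φ : ℂ) * Complex.I))‖)) 0)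
      MeasureTheory.volume 0 (2 * Real.pi) := hcont.intervalIntegrable _ _
  have hle : (∫ φ in (0:ℝ)..(2 * Real.pi),
      max (Real.log (1 / ‖deriv zinv
        ((t : ℂ) * Complex.exp ((φ : ℂ) * Complex.I))‖)) 0) ≤
      ∫ _ in (0:ℝ)..(2 * Real.pi), C := by
    apply intervalIntegral.integral_mono_on (by positivity) hInt
      (intervalIntegrable_const)
    intro x _
    exact (key _ (hball x)).2
  rw [intervalIntegral.integral_const, smul_eq_mul, sub_zero] at hle
  have h2π : 0 < 2 * Real.pi := by positivity
  calc (1 / (2 * Real.pi)) * ∫ φ in (0:ℝ)..(2 * Real.pi),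
        max (Real.log (1 / ‖deriv zinv
          ((t : ℂ) * Complex.exp ((φ : ℂ) * Complex.I))‖)) 0
      ≤ (1 / (2 * Real.pi)) * (2 * Real.pi * C) := by
        apply mul_le_mul_of_nonneg_left hle (by positivity)
    _ = C := by field_simp
end

section
/- Let θ ∈ ℝ, 0 < η < 1, α = π/(2η), G(1,θ,η) = {z ∈ ℂ : 0 < |z| < 1 and |arg(z e^{−iθ})| < η}, let ζ : G(1,θ,η) → {|ζ| < 1} be the conformal map ζ(z) = (u² + 2u − 1)/(u² − 2u − 1), u = (z e^{−iθ})^α (principal branch), and let z = z(ζ) be its inverse. Let w be any function on G(1,θ,η) (with values in ℂ, or in the Riemann sphere) and let a be any value. Then for every r with 1/2 < r < 1, the number of points of the set {z : 1/2 < |z| < r, |arg(z e^{−iθ})| < η/2, w(z) = a} does not exceed the number of points of the set {ζ : |ζ| < 1 − 2^{−π/(2η) − π/2}(1 − r), w(z(ζ)) = a}; i.e., the map ζ injects the first solution set into the second. -/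
open Complex

lemma two_rpow_neg_pi_half_lt : (2:ℝ) ^ (-(Real.pi/2)) < Real.sqrt 2 / 3 := by
  have hs2 : Real.sqrt 2 ^ 2 = 2 := Real.sq_sqrt (by norm_num)
  have hs2pos : 0 < Real.sqrt 2 := Real.sqrt_pos.mpr (by norm_num)
  have h1 : (2:ℝ) ^ (-(Real.pi/2)) < (2:ℝ) ^ (-(3/2) : ℝ) := by
    apply Real.rpow_lt_rpow_of_exponent_lt (by norm_num)
    have := Real.pi_gt_three; linarith
  have h2 : (2:ℝ) ^ (-(3/2) : ℝ) = ((2:ℝ) * Real.sqrt 2)⁻¹ := by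
    rw [Real.rpow_neg (by norm_num)]
    congr 1
    rw [show (3/2 : ℝ) = 1 + 1/2 by norm_num, Real.rpow_add (by norm_num), Real.rpow_one,
      ← Real.sqrt_eq_rpow]
  rw [h2] at h1
  have : ((2:ℝ) * Real.sqrt 2)⁻¹ < Real.sqrt 2 / 3 := by
    rw [inv_lt_iff_one_lt_mul₀ (by positivity)]
    nlinarith
  linarith

lemma aux_sin (c sn r2 : ℝ) (hr2 : r2^2 = 2) (hr2p : 0 < r2) (h : sn^2 + c^2 = 1)
    (hc : r2/2 < c) : |sn| < c := by
  nlinarith [abs_nonneg sn, _root_.sq_abs sn]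

lemma aux_D6 (X Yv : ℝ) (hX1 : X ≤ 1) (hAnn : 0 ≤ X^2 - Yv^2) (hs1 : X^2 + Yv^2 ≤ 1) :
    (X^2 - Yv^2 - 2*X - 1)^2 + (2*X*Yv - 2*Yv)^2 ≤ 6 := by
  nlinarith [mul_nonneg (by linarith : (0:ℝ) ≤ 1 - (X^2+Yv^2))
    (by nlinarith [sq_nonneg X, sq_nonneg Yv] : (0:ℝ) ≤ 5 + (X^2+Yv^2) - 4*X), hAnn]

lemma aux_sq (a b e : ℝ) (he0 : 0 ≤ e) (hb6 : b^2 ≤ 6) (h : a^2 < b^2 - 12*e) :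
    a^2 < ((1-e)*b)^2 := by nlinarith [sq_nonneg (e*b), mul_nonneg he0 (by linarith : (0:ℝ) ≤ 6 - b^2)]

set_option maxHeartbeats 800000 in
lemma sectorMap_abs_lt (θ η : ℝ) (hη0 : 0 < η) (hη1 : η < 1) {r : ℝ} (hr0 : 1/2 < r)
    (hr1 : r < 1) {z : ℂ} (h1 : 1/2 < ‖z‖) (h2 : ‖z‖ < r)
    (h3 : |Complex.arg (z * Complex.exp (-(θ : ℂ) * Complex.I))| < η/2) :
    ‖sectorMap θ η z‖
      < 1 - (2:ℝ) ^ (-(Real.pi/(2*η)) - Real.pi/2) * (1 - r) := by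
  have hs2 : Real.sqrt 2 ^ 2 = 2 := Real.sq_sqrt (by norm_num)
  have hs2pos : 0 < Real.sqrt 2 := Real.sqrt_pos.mpr (by norm_num)
  have hπ := Real.pi_gt_three
  set α : ℝ := Real.pi / (2*η) with hαdef
  have hα1 : 1 < α := by
    rw [hαdef, lt_div_iff₀ (by linarith)]; linarith
  set w' : ℂ := z * Complex.exp (-(θ : ℂ) * Complex.I) with hwdef
  have habsw : ‖w'‖ = ‖z‖ := by
    rw [hwdef, norm_mul, Complex.norm_exp]; simp
  have hw0 : w' ≠ 0 := by
    intro h; rw [h] at habsw; simp at habsw; rw [← habsw] at h1; norm_num at h1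
  set u : ℂ := w' ^ ((α : ℝ) : ℂ) with hudef
  set φ : ℝ := Complex.arg w' with hφdef
  set t : ℝ := ‖w'‖ ^ α with htdef
  have habszpos : (0:ℝ) < ‖z‖ := by linarith
  have ht0 : 0 < t := Real.rpow_pos_of_pos (by rw [habsw]; exact habszpos) α
  -- re and im of u
  have hu : u = Complex.exp (Complex.log w' * (α:ℂ)) := Complex.cpow_def_of_ne_zero hw0 _
  have hre : u.re = t * Real.cos (α * φ) := by
    rw [hu, Complex.exp_re]
    have h1' : (Complex.log w' * (α:ℂ)).re = Real.log (‖w'‖) * α := by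
      simp [Complex.log_re]
    have h2' : (Complex.log w' * (α:ℂ)).im = φ * α := by
      simp [Complex.log_im, hφdef]
    rw [h1', h2', htdef, Real.rpow_def_of_pos (by rw [habsw]; exact habszpos), mul_comm φ α]
  have him : u.im = t * Real.sin (α * φ) := by
    rw [hu, Complex.exp_im]
    have h1' : (Complex.log w' * (α:ℂ)).re = Real.log (‖w'‖) * α := by
      simp [Complex.log_re]
    have h2' : (Complex.log w' * (α:ℂ)).im = φ * α := by
      simp [Complex.log_im, hφdef]
    rw [h1', h2', htdef, Real.rpow_def_of_pos (by rw [habsw]; exact habszpos), mul_comm φ α]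
  -- angle bound
  have hαφ : |α * φ| < Real.pi / 4 := by
    have hαpos : 0 < α := by linarith
    have : |α * φ| = α * |φ| := by rw [abs_mul, abs_of_pos hαpos]
    rw [this]
    have hφlt : |φ| < η / 2 := h3
    have : α * |φ| < α * (η/2) := mul_lt_mul_of_pos_left hφlt hαpos
    have heq : α * (η/2) = Real.pi / 4 := by
      rw [hαdef]; field_simp; ring
    linarith
  have hcos : Real.sqrt 2 / 2 < Real.cos (α * φ) := by
    have := Real.cos_lt_cos_of_nonneg_of_le_pi (abs_nonneg (α * φ))
      (by linarith [Real.pi_pos]) hαφ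
    rw [Real.cos_abs] at this
    rw [← Real.cos_pi_div_four]
    exact this
  have hsin : |Real.sin (α * φ)| < Real.cos (α * φ) :=
    aux_sin _ _ _ hs2 hs2pos (Real.sin_sq_add_cos_sq (α * φ)) hcos
  set X : ℝ := u.re with hXdef
  set Yv : ℝ := u.im with hYvdef
  have hnN : Complex.normSq (u^2 + 2*u - 1) = (X^2 - Yv^2 + 2*X - 1)^2 + (2*X*Yv + 2*Yv)^2 := by
    simp only [Complex.normSq_apply, pow_two, Complex.add_re, Complex.add_im, Complex.sub_re,
      Complex.sub_im, Complex.mul_re, Complex.mul_im, Complex.one_re, Complex.one_im,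
      Complex.re_ofNat, Complex.im_ofNat]
    ring
  have hnD : Complex.normSq (u^2 - 2*u - 1) = (X^2 - Yv^2 - 2*X - 1)^2 + (2*X*Yv - 2*Yv)^2 := by
    simp only [Complex.normSq_apply, pow_two, Complex.add_re, Complex.add_im, Complex.sub_re,
      Complex.sub_im, Complex.mul_re, Complex.mul_im, Complex.one_re, Complex.one_im,
      Complex.re_ofNat, Complex.im_ofNat]
    ring
  set nN : ℝ := Complex.normSq (u^2 + 2*u - 1) with hnNdef
  set nD : ℝ := Complex.normSq (u^2 - 2*u - 1) with hnDdef
  set A' : ℝ := ‖u^2 + 2*u - 1‖ with hA'def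
  set B' : ℝ := ‖u^2 - 2*u - 1‖ with hB'def
  have ha2 : A'^2 = nN := Complex.sq_norm _
  have hb2 : B'^2 = nD := Complex.sq_norm _
  have hNnn : (0:ℝ) ≤ nN := Complex.normSq_nonneg _
  have hfin : ‖sectorMap θ η z‖ = A' / B' := by
    have heq : sectorMap θ η z = (u^2 + 2*u - 1) / (u^2 - 2*u - 1) := rfl
    rw [heq, norm_div]
  have hBnn : (0:ℝ) ≤ B' := norm_nonneg _
  clear_value X Yv nN nD A' B'
  clear hnNdef hnDdef hA'def hB'def hXdef hYvdef hudef hu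
  have ht2 : X^2 + Yv^2 = t^2 := by
    rw [hre, him]; linear_combination t^2 * Real.sin_sq_add_cos_sq (α * φ)
  have hXpos : t * (Real.sqrt 2 / 2) < X := by
    rw [hre]; exact mul_lt_mul_of_pos_left hcos ht0
  have hYX : |Yv| < X := by
    rw [hre, him, abs_mul, abs_of_pos ht0]
    exact mul_lt_mul_of_pos_left hsin ht0
  -- t bounds
  have htlo : (2:ℝ) ^ (-α) < t := by
    have h' : ((1:ℝ)/2) ^ α < ‖z‖ ^ α :=
      Real.rpow_lt_rpow (by norm_num) h1 (by linarith)
    have heq : ((1:ℝ)/2) ^ α = (2:ℝ) ^ (-α) := by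
      rw [Real.rpow_neg (by norm_num), ← Real.inv_rpow (by norm_num)]; norm_num
    rw [htdef, habsw, ← heq]; exact h'
  have hthi : t < r := by
    have h' : ‖z‖ ^ α < ‖z‖ ^ (1:ℝ) :=
      Real.rpow_lt_rpow_of_exponent_gt habszpos (by linarith) hα1
    rw [Real.rpow_one] at h'
    rw [htdef, habsw]; linarith
  -- constants
  set K : ℝ := (2:ℝ) ^ (-α - Real.pi/2) with hKdef
  have hKsplit : K = (2:ℝ) ^ (-α) * (2:ℝ) ^ (-(Real.pi/2)) := by
    rw [hKdef, show -α - Real.pi/2 = (-α) + (-(Real.pi/2)) by ring,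
      Real.rpow_add (by norm_num)]
  set ε : ℝ := K * (1 - r) with hεdef
  have hPpos : (0:ℝ) < (2:ℝ) ^ (-α) := Real.rpow_pos_of_pos (by norm_num) _
  have hε0 : 0 < ε := by
    have : (0:ℝ) < K := Real.rpow_pos_of_pos (by norm_num) _
    have : (0:ℝ) < 1 - r := by linarith
    positivity
  have hεhalf : ε < 1/2 := by
    have hK1 : K < 1 := Real.rpow_lt_one_of_one_lt_of_neg (by norm_num) (by linarith)
    have hK0 : 0 < K := Real.rpow_pos_of_pos (by norm_num) _
    have : K * (1 - r) ≤ 1 * (1 - r) := mul_le_mul_of_nonneg_right hK1.le (by linarith)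
    rw [hεdef]; linarith
  -- main chain: 12 ε < 8 X (1 - t²)
  have hchain : 12 * ε < 8 * X * (1 - t^2) := by
    have hnum := two_rpow_neg_pi_half_lt
    have hQpos : (0:ℝ) < (2:ℝ)^(-α) * (1 - r) := mul_pos hPpos (by linarith)
    have hA : 12 * ε < 4 * Real.sqrt 2 * ((2:ℝ)^(-α) * (1 - r)) := by
      have hp : (0:ℝ) < 12 * ((2:ℝ)^(-α) * (1 - r)) := by linarith
      calc 12 * ε = (12 * ((2:ℝ)^(-α) * (1 - r))) * ((2:ℝ) ^ (-(Real.pi/2))) := by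
            rw [hεdef, hKsplit]; ring
        _ < (12 * ((2:ℝ)^(-α) * (1 - r))) * (Real.sqrt 2 / 3) :=
            mul_lt_mul_of_pos_left hnum hp
        _ = 4 * Real.sqrt 2 * ((2:ℝ)^(-α) * (1 - r)) := by ring
    have ht1 : t < 1 := by linarith
    have hXlo : (2:ℝ)^(-α) * (Real.sqrt 2 / 2) < X := by
      have := mul_lt_mul_of_pos_right htlo (by positivity : (0:ℝ) < Real.sqrt 2 / 2)
      linarith
    have htt : t^2 < t := by
      rw [pow_two]
      calc t*t < 1*t := mul_lt_mul_of_pos_right (by linarith) ht0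
        _ = t := one_mul t
    have h1t2 : 1 - r < 1 - t^2 := by linarith
    have hXpos2 : 0 < X := lt_trans (by positivity) hXlo
    have h8 : ((2:ℝ)^(-α) * (Real.sqrt 2 / 2)) * (1 - r) < X * (1 - t^2) :=
      mul_lt_mul hXlo h1t2.le (by linarith) hXpos2.le
    linarith [hA, h8]
  have hXpos2 : 0 < X := lt_trans (mul_pos ht0 (by positivity)) hXpos
  have ht1' : t < 1 := by linarith
  have ht2lt : t^2 < 1 := pow_lt_one₀ ht0.le ht1' (by norm_num)
  have hs1 : X^2 + Yv^2 ≤ 1 := by rw [ht2]; linarith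
  have hX1 : X ≤ 1 := by
    have hX2 : X^2 ≤ 1^2 := by rw [one_pow]; linarith [sq_nonneg Yv]
    exact le_of_pow_le_pow_left₀ (by norm_num) (by norm_num) hX2
  have hAnn : 0 ≤ X^2 - Yv^2 := by
    have hYlt := abs_lt.mp hYX
    have h' : Yv^2 < X^2 := sq_lt_sq' hYlt.1 hYlt.2
    linarith
  have hD6 : (X^2 - Yv^2 - 2*X - 1)^2 + (2*X*Yv - 2*Yv)^2 ≤ 6 := aux_D6 X Yv hX1 hAnn hs1
  have hdiff : nD - nN = 8*X*(1 - t^2) := by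
    rw [hnN, hnD, ← ht2]; ring
  have h12 : nN < nD - 12*ε := by linarith
  have hbpos : 0 < B' := by
    have hb2pos : 0 < B'^2 := by rw [hb2]; linarith
    rcases hBnn.lt_or_eq with h | h
    · exact h
    · exfalso; rw [← h] at hb2pos; simp at hb2pos
  have hb6 : B'^2 ≤ 6 := by rw [hb2, hnD]; exact hD6
  have hsq : A'^2 < ((1-ε)*B')^2 := by
    apply aux_sq _ _ _ hε0.le hb6
    rw [ha2, hb2]; linarith
  have hab : A' < (1-ε)*B' := by
    have hnn : 0 ≤ (1-ε)*B' := mul_nonneg (by linarith) hBnn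
    exact lt_of_pow_lt_pow_left₀ 2 hnn hsq
  rw [hfin, div_lt_iff₀ hbpos]
  linarith [hab]

/-- Let `ζ` be the conformal map of `G(1,θ,η)` onto the unit disk, with
inverse `z(·)` (`zinv` below). For any function `w` on the sector and any value `a`, and
any `1/2 < r < 1`, the map `ζ` injects the set of solutions of `w(z) = a` in the truncated
half-angle sector `{1/2 < |z| < r, |arg (z e^{-iθ})| < η/2}` into the set of solutions of
`w(z(ζ)) = a` in the disk `{|ζ| < 1 - 2^{-π/(2η)-π/2}(1-r)}`; in particular the number of
points of the first set does not exceed the number of points of the second. -/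
theorem card_sector_solutions_le (θ η : ℝ) (hη0 : 0 < η) (hη1 : η < 1)
    {Y : Type*} (w : ℂ → Y) (a : Y)
    (zinv : ℂ → ℂ)
    (hbij : Set.BijOn (sectorMap θ η) (sector θ η) (Metric.ball (0 : ℂ) 1))
    (hmaps : Set.MapsTo zinv (Metric.ball (0 : ℂ) 1) (sector θ η))
    (hinv : Set.InvOn zinv (sectorMap θ η) (sector θ η) (Metric.ball (0 : ℂ) 1))
    (r : ℝ) (hr0 : 1 / 2 < r) (hr1 : r < 1) :
    Set.InjOn (sectorMap θ η)
        {z : ℂ | 1 / 2 < ‖z‖ ∧ ‖z‖ < r ∧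
          |Complex.arg (z * Complex.exp (-(θ : ℂ) * Complex.I))| < η / 2 ∧ w z = a} ∧
    Set.MapsTo (sectorMap θ η)
        {z : ℂ | 1 / 2 < ‖z‖ ∧ ‖z‖ < r ∧
          |Complex.arg (z * Complex.exp (-(θ : ℂ) * Complex.I))| < η / 2 ∧ w z = a}
        {ζ' : ℂ | ‖ζ'‖ < 1 - (2 : ℝ) ^ (-(Real.pi / (2 * η)) - Real.pi / 2) * (1 - r)
          ∧ w (zinv ζ') = a} ∧
    Cardinal.mk
        ↥{z : ℂ | 1 / 2 < ‖z‖ ∧ ‖z‖ < r ∧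
          |Complex.arg (z * Complex.exp (-(θ : ℂ) * Complex.I))| < η / 2 ∧ w z = a}
      ≤ Cardinal.mk
        ↥{ζ' : ℂ | ‖ζ'‖ < 1 - (2 : ℝ) ^ (-(Real.pi / (2 * η)) - Real.pi / 2) * (1 - r)
          ∧ w (zinv ζ') = a} := by
  set S : Set ℂ := {z : ℂ | 1 / 2 < ‖z‖ ∧ ‖z‖ < r ∧
    |Complex.arg (z * Complex.exp (-(θ : ℂ) * Complex.I))| < η / 2 ∧ w z = a} with hSdef
  set T : Set ℂ := {ζ' : ℂ | ‖ζ'‖ < 1 - (2 : ℝ) ^ (-(Real.pi / (2 * η)) - Real.pi / 2) * (1 - r)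
    ∧ w (zinv ζ') = a} with hTdef
  have hsub : S ⊆ sector θ η := by
    rintro z ⟨hz1, hz2, hz3, hz4⟩
    exact ⟨by linarith, by linarith, by linarith [abs_nonneg (Complex.arg
      (z * Complex.exp (-(θ : ℂ) * Complex.I)))]⟩
  have hinj : Set.InjOn (sectorMap θ η) S := hbij.injOn.mono hsub
  have hmapsTo : Set.MapsTo (sectorMap θ η) S T := by
    rintro z ⟨hz1, hz2, hz3, hz4⟩
    refine ⟨sectorMap_abs_lt θ η hη0 hη1 hr0 hr1 hz1 hz2 hz3, ?_⟩
    rw [hinv.1 (hsub ⟨hz1, hz2, hz3, hz4⟩)]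
    exact hz4
  refine ⟨hinj, hmapsTo, ?_⟩
  exact Cardinal.mk_le_of_injective (f := fun x : S => (⟨sectorMap θ η x.1, hmapsTo x.2⟩ : T))
    (fun x y hxy => Subtype.ext (hinj x.2 y.2 (congrArg Subtype.val hxy)))
end

section
/- Let θ ∈ ℝ, 0 < η < 1, α = π/(2η), G(1,θ,η) = {z ∈ ℂ : 0 < |z| < 1 and |arg(z e^{−iθ})| < η}, let ζ : G(1,θ,η) → {|ζ| < 1} be the conformal map ζ(z) = (u² + 2u − 1)/(u² − 2u − 1), u = (z e^{−iθ})^α (principal branch), and let z = z(ζ) be its inverse. Let w be any function on G(1,θ,η) (with values in ℂ, or in the Riemann sphere) and let a be any value. Then for every γ with 0 < γ < 1, the number of points of the set {ζ : |ζ| ≤ γ, w(z(ζ)) = a} does not exceed the number of points of the set {z : |z| < 1 − (η/(8π))(1 − γ), |arg(z e^{−iθ})| < η, w(z) = a}; i.e., the map z(·) injects the first solution set into the second. -/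
open Complex

set_option maxHeartbeats 2000000 in
lemma key_bound (θ η : ℝ) (hη0 : 0 < η) (hη1 : η < 1)
    {z : ℂ} (hz : z ∈ sector θ η) {γ : ℝ} (hγ0 : 0 < γ) (hγ1 : γ < 1)
    (hζ : ‖sectorMap θ η z‖ ≤ γ) :
    ‖z‖ < 1 - (η / (8 * Real.pi)) * (1 - γ) := by
  obtain ⟨hr0, hr1, harg⟩ := hz
  simp only [sectorMap] at hζ
  set r : ℝ := ‖z‖ with hr
  set α : ℝ := Real.pi / (2 * η) with hα
  have hα0 : 0 < α := div_pos Real.pi_pos (by linarith)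
  have hα1 : 1 < α := by
    rw [hα, lt_div_iff₀ (by linarith)]
    nlinarith [Real.pi_gt_three]
  set w0 : ℂ := z * Complex.exp (-(θ : ℂ) * Complex.I) with hw0def
  have habsw0 : ‖w0‖ = r := by
    rw [hw0def, norm_mul, Complex.norm_exp]
    simp [hr]
  have hw0 : w0 ≠ 0 := by
    intro h; rw [h] at habsw0; simp at habsw0; rw [← habsw0] at hr0; simp at hr0
  set u : ℂ := w0 ^ ((α : ℝ) : ℂ) with hudef
  have hucexp : u = Complex.exp (Complex.log w0 * (α : ℂ)) :=
    Complex.cpow_def_of_ne_zero hw0 _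
  have hre_arg : (Complex.log w0 * (α : ℂ)).re = Real.log r * α := by
    simp [Complex.mul_re, Complex.log_re, habsw0]
  have him_arg : (Complex.log w0 * (α : ℂ)).im = Complex.arg w0 * α := by
    simp [Complex.mul_im, Complex.log_im]
  have habsu : ‖u‖ = r ^ α := by
    rw [hucexp, Complex.norm_exp, hre_arg, Real.rpow_def_of_pos hr0]
  have hcos : 0 < Real.cos (Complex.arg w0 * α) := by
    apply Real.cos_pos_of_mem_Ioo
    constructor
    · have h1 : -η < Complex.arg w0 := by
        have := abs_lt.mp harg; exact this.1
      have : -η * α < Complex.arg w0 * α := by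
        apply mul_lt_mul_of_pos_right h1 hα0
      have hηα : η * α = Real.pi / 2 := by
        rw [hα, mul_div_assoc', mul_comm 2 η, mul_div_mul_left _ _ hη0.ne']
      calc -(Real.pi/2) = -η * α := by rw [neg_mul]; rw [hηα]
        _ < Complex.arg w0 * α := this
    · have h1 : Complex.arg w0 < η := (abs_lt.mp harg).2
      have : Complex.arg w0 * α < η * α := mul_lt_mul_of_pos_right h1 hα0
      have hηα : η * α = Real.pi / 2 := by
        rw [hα, mul_div_assoc', mul_comm 2 η, mul_div_mul_left _ _ hη0.ne']
      rw [← hηα]; exact this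
  have hxpos : 0 < u.re := by
    rw [hucexp, Complex.exp_re, hre_arg, him_arg]
    exact mul_pos (Real.exp_pos _) hcos
  have hux : u.re ≤ ‖u‖ := Complex.re_le_norm u
  have habsu1 : ‖u‖ < 1 := by
    rw [habsu]; exact Real.rpow_lt_one hr0.le hr1 hα0
  have hx1 : u.re < 1 := lt_of_le_of_lt hux habsu1
  -- num and den
  set num : ℂ := u ^ 2 + 2 * u - 1 with hnum
  set den : ℂ := u ^ 2 - 2 * u - 1 with hden
  have key1 : Complex.normSq den - Complex.normSq num
      = 8 * u.re * (Complex.normSq u - 1) * (-1) := by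
    simp only [hnum, hden, Complex.normSq_apply, Complex.sub_re, Complex.sub_im,
      Complex.add_re, Complex.add_im, Complex.mul_re, Complex.mul_im, pow_two,
      Complex.one_re, Complex.one_im, Complex.re_ofNat, Complex.im_ofNat]
    ring
  have key2 : Complex.normSq den
      = (2 - (1 - u.re)^2)^2 + u.im^2 * (2*(u.re-1)^2 + 4 + u.im^2) := by
    simp only [hden, Complex.normSq_apply, Complex.sub_re, Complex.sub_im,
      Complex.mul_re, Complex.mul_im, pow_two,
      Complex.one_re, Complex.one_im, Complex.re_ofNat, Complex.im_ofNat]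
    ring
  clear_value w0 u num den
  clear hucexp hre_arg him_arg hcos hw0 habsw0 harg hudef hw0def hnum hden
  clear_value r α
  have hden1 : 1 < Complex.normSq den := by
    rw [key2]
    have h1 : 0 < u.re * (2 - u.re) := mul_pos hxpos (by linarith)
    have h2 : 0 ≤ u.im^2 * (2*(u.re-1)^2 + 4 + u.im^2) := by positivity
    nlinarith [h1, h2, sq_nonneg (u.re * (2 - u.re))]
  have hden0 : den ≠ 0 := by
    intro h; rw [h] at hden1; simp at hden1; linarith
  have habsnum : ‖num‖ ≤ γ * ‖den‖ := by
    rw [norm_div] at hζ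
    have hdpos : 0 < ‖den‖ := by
      simp [hden0]
    rw [div_le_iff₀ hdpos] at hζ
    linarith
  have hnormle : Complex.normSq num ≤ γ^2 * Complex.normSq den := by
    rw [← Complex.sq_norm, ← Complex.sq_norm]
    calc ‖num‖ ^ 2 ≤ (γ * ‖den‖)^2 := by
          apply pow_le_pow_left₀ (norm_nonneg _) habsnum
      _ = γ^2 * ‖den‖ ^2 := by ring
  -- main chain
  have hnsqu : Complex.normSq u = (‖u‖)^2 := (Complex.sq_norm u).symm
  have hchain : 1 - γ < 8 * u.re * (1 - Complex.normSq u) := by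
    have h1 : (1 - γ^2) * Complex.normSq den ≤ Complex.normSq den - Complex.normSq num := by
      nlinarith
    have h2 : 1 - γ^2 < (1 - γ^2) * Complex.normSq den := by
      have : 0 < 1 - γ^2 := by nlinarith
      nlinarith
    have h3 : 1 - γ ≤ 1 - γ^2 := by nlinarith
    nlinarith [key1]
  have hfinal : 1 - γ < 16 * α * (1 - r) := by
    have h4 : 8 * u.re * (1 - Complex.normSq u) ≤ 16 * (1 - ‖u‖) := by
      rw [hnsqu]
      have h2mx : 0 ≤ 2 - u.re * (1 + ‖u‖) := by
        nlinarith [norm_nonneg u]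
      nlinarith [mul_nonneg (sub_nonneg.mpr habsu1.le) h2mx]
    have h5 : 1 - ‖u‖ ≤ α * (1 - r) := by
      rw [habsu]
      have hb := one_add_mul_self_le_rpow_one_add (s := r - 1) (p := α)
        (by linarith) hα1.le
      have : (1 + (r-1)) = r := by ring
      rw [this] at hb
      linarith
    nlinarith
  -- conclude
  have h16 : η / (8 * Real.pi) * (1 - γ) < 1 - r := by
    have hpi : 0 < Real.pi := Real.pi_pos
    have h16α : η / (8 * Real.pi) = 1 / (16 * α) := by
      rw [hα]; field_simp; ring
    rw [h16α, div_mul_eq_mul_div, div_lt_iff₀ (by positivity), one_mul]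
    nlinarith [hfinal, hα0]
  linarith

/-- Let `ζ` be the conformal map of `G(1,θ,η)` onto the unit disk, with
inverse `z(·)` (`zinv` below). For any function `w` on the sector and any value `a`, and
any `0 < γ < 1`, the map `z(·)` injects the set of solutions of `w(z(ζ)) = a` in the closed
disk `{|ζ| ≤ γ}` into the set of solutions of `w(z) = a` in
`{|z| < 1 - (η/(8π))(1-γ), |arg (z e^{-iθ})| < η}`; in particular the number of points of
the first set does not exceed the number of points of the second. -/
theorem card_disk_solutions_le (θ η : ℝ) (hη0 : 0 < η) (hη1 : η < 1)
    {Y : Type*} (w : ℂ → Y) (a : Y)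
    (zinv : ℂ → ℂ)
    (hbij : Set.BijOn (sectorMap θ η) (sector θ η) (Metric.ball (0 : ℂ) 1))
    (hmaps : Set.MapsTo zinv (Metric.ball (0 : ℂ) 1) (sector θ η))
    (hinv : Set.InvOn zinv (sectorMap θ η) (sector θ η) (Metric.ball (0 : ℂ) 1))
    (γ : ℝ) (hγ0 : 0 < γ) (hγ1 : γ < 1) :
    Set.InjOn zinv {ζ' : ℂ | ‖ζ'‖ ≤ γ ∧ w (zinv ζ') = a} ∧
    Set.MapsTo zinv {ζ' : ℂ | ‖ζ'‖ ≤ γ ∧ w (zinv ζ') = a}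
        {z : ℂ | ‖z‖ < 1 - (η / (8 * Real.pi)) * (1 - γ) ∧
          |Complex.arg (z * Complex.exp (-(θ : ℂ) * Complex.I))| < η ∧ w z = a} ∧
    Cardinal.mk ↥{ζ' : ℂ | ‖ζ'‖ ≤ γ ∧ w (zinv ζ') = a}
      ≤ Cardinal.mk
        ↥{z : ℂ | ‖z‖ < 1 - (η / (8 * Real.pi)) * (1 - γ) ∧
          |Complex.arg (z * Complex.exp (-(θ : ℂ) * Complex.I))| < η ∧ w z = a} := by
  have hball : ∀ ζ' : ℂ, ‖ζ'‖ ≤ γ → ζ' ∈ Metric.ball (0 : ℂ) 1 := by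
    intro ζ' h
    simp only [Metric.mem_ball, Complex.dist_eq, sub_zero]
    exact lt_of_le_of_lt h hγ1
  have hsec : ∀ ζ' : ℂ, ‖ζ'‖ ≤ γ → zinv ζ' ∈ sector θ η := fun ζ' h =>
    hmaps (hball ζ' h)
  have hright : ∀ ζ' : ℂ, ‖ζ'‖ ≤ γ → sectorMap θ η (zinv ζ') = ζ' := fun ζ' h =>
    hinv.2 (hball ζ' h)
  have hinj : Set.InjOn zinv {ζ' : ℂ | ‖ζ'‖ ≤ γ ∧ w (zinv ζ') = a} := by
    intro ζ1 h1 ζ2 h2 heq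
    have := hright ζ1 h1.1
    rw [← this, heq, hright ζ2 h2.1]
  have hmapsTo : Set.MapsTo zinv {ζ' : ℂ | ‖ζ'‖ ≤ γ ∧ w (zinv ζ') = a}
        {z : ℂ | ‖z‖ < 1 - (η / (8 * Real.pi)) * (1 - γ) ∧
          |Complex.arg (z * Complex.exp (-(θ : ℂ) * Complex.I))| < η ∧ w z = a} := by
    intro ζ' hζ'
    obtain ⟨hle, hwa⟩ := hζ'
    have hzs := hsec ζ' hle
    refine ⟨?_, hzs.2.2, hwa⟩
    apply key_bound θ η hη0 hη1 hzs hγ0 hγ1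
    rw [hright ζ' hle]
    exact hle
  refine ⟨hinj, hmapsTo, ?_⟩
  exact Cardinal.mk_le_of_injective (f := fun x => ⟨zinv x.1, hmapsTo x.2⟩)
    (fun x y hxy => Subtype.ext (hinj x.2 y.2 (congrArg Subtype.val hxy)))
end
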